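/- For the mass-spring-damper system q̈ + g(q̇ + μ₀) - g(μ₀) = f(e^q x*) - f(x*) with f strictly decreasing, g strictly increasing, the only solution along which the energy V is constant is the equilibrium solution (q,p) ≡ (0,0). (LaSalle invariance: the largest invariant set in {V̇ = 0} is the origin.) -/

import Mathlib

theorem stmt_12 (μ₀ : ℝ) (xs : ℝ) (hxs : 0 < xs) (f g : ℝ → ℝ)
    (hf : ContinuousOn f (Set.Ioi 0)) (hfanti : StrictAntiOn f (Set.Ioi 0))
    (hg : Continuous g) (hgmono : StrictMono g)
    (hcomp : f xs = g μ₀)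
    (V : ℝ → ℝ → ℝ)
    (hV : ∀ a b, V a b = b ^ 2 / 2 + ∫ s in (0:ℝ)..a, (g μ₀ - f (Real.exp s * xs)))
    (q p : ℝ → ℝ)
    (hq : ∀ t, HasDerivAt q (p t) t)
    (hp : ∀ t, HasDerivAt p (f (Real.exp (q t) * xs) - g (p t + μ₀)) t)
    (hVconst : ∀ t, V (q t) (p t) = V (q 0) (p 0)) :
    ∀ t, q t = 0 ∧ p t = 0 := by
  -- continuity of the integrand
  have hcont : Continuous (fun s : ℝ => g μ₀ - f (Real.exp s * xs)) := by
    apply continuous_const.sub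
    exact hf.comp_continuous (Real.continuous_exp.mul continuous_const)
      (fun s => Set.mem_Ioi.mpr (mul_pos (Real.exp_pos s) hxs))
  -- derivative of the potential part
  have hF : ∀ a : ℝ, HasDerivAt (fun a : ℝ => ∫ s in (0:ℝ)..a, (g μ₀ - f (Real.exp s * xs)))
      (g μ₀ - f (Real.exp a * xs)) a := by
    intro a
    exact intervalIntegral.integral_hasDerivAt_right (hcont.intervalIntegrable 0 a)
      (hcont.stronglyMeasurableAtFilter _ _) hcont.continuousAt
  -- p ≡ 0
  have hp0 : ∀ t, p t = 0 := by
    intro t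
    have hW : HasDerivAt (fun t => V (q t) (p t))
        ((2 * p t ^ 1 * (f (Real.exp (q t) * xs) - g (p t + μ₀))) / 2
          + (g μ₀ - f (Real.exp (q t) * xs)) * p t) t := by
      have h1 : HasDerivAt (fun t => p t ^ 2 / 2)
          ((2 * p t ^ 1 * (f (Real.exp (q t) * xs) - g (p t + μ₀))) / 2) t :=
        ((hp t).pow 2).div_const 2
      have h2 : HasDerivAt (fun t => ∫ s in (0:ℝ)..(q t), (g μ₀ - f (Real.exp s * xs)))
          ((g μ₀ - f (Real.exp (q t) * xs)) * p t) t :=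
        (hF (q t)).comp t (hq t)
      have := h1.add h2
      simpa only [Pi.add_def, ← hV] using this
    have hWc : (fun t => V (q t) (p t)) = fun _ => V (q 0) (p 0) := funext hVconst
    have h0 : HasDerivAt (fun t => V (q t) (p t)) 0 t := by
      rw [hWc]; exact hasDerivAt_const t _
    have heq := hW.unique h0
    have key : p t * (g μ₀ - g (p t + μ₀)) = 0 := by nlinarith [heq]
    by_contra hne
    rcases lt_or_gt_of_ne hne with hlt | hgt
    · have : g (p t + μ₀) < g μ₀ := hgmono (by linarith)
      nlinarith
    · have : g μ₀ < g (p t + μ₀) := hgmono (by linarith)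
      nlinarith
  intro t
  refine ⟨?_, hp0 t⟩
  have hpconst : p = fun _ => 0 := funext hp0
  have h0 : HasDerivAt p 0 t := by rw [hpconst]; exact hasDerivAt_const t _
  have := (hp t).unique h0
  rw [hp0 t, zero_add] at this
  have hfeq : f (Real.exp (q t) * xs) = f xs := by rw [hcomp]; linarith
  have := hfanti.injOn (Set.mem_Ioi.mpr (mul_pos (Real.exp_pos _) hxs))
    (Set.mem_Ioi.mpr hxs) hfeq
  have h1 : Real.exp (q t) = Real.exp 0 := by
    rw [Real.exp_zero]
    have := mul_right_cancel₀ (ne_of_gt hxs) (this.trans (one_mul xs).symm)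
    exact this
  exact Real.exp_eq_exp.mp h1
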